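/- arXiv:0910.2682 — 6 statements merged into one kernel-verified Lean document; each statement's English description precedes it below -/
import Mathlib

section
/- Let δ ∈ Γ with δ ≥ 0 and let x_1, …, x_n ∈ K, not all zero, satisfy v(x_1 + … + x_n) = min_i v(x_i). Then for every y ∈ K: rv_δ(y) = rv_δ(x_1 + … + x_n) if and only if there exist x_1′, …, x_n′ ∈ K with rv_δ(x_i′) = rv_δ(x_i) for each i and rv_δ(x_1′ + … + x_n′) = rv_δ(y). -/
/-- `rv_δ(x) = rv_δ(y)`: either both are zero, or both are nonzero and
`v(x − y) > v(y) + δ`. -/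
def RvEq {K : Type*} [Field K] {Γ : Type*} [AddCommGroup Γ] [LinearOrder Γ] [IsOrderedAddMonoid Γ]
    (v : K → WithTop Γ) (δ : WithTop Γ) (x y : K) : Prop :=
  (x = 0 ∧ y = 0) ∨ (x ≠ 0 ∧ y ≠ 0 ∧ v y + δ < v (x - y))

lemma aux_sum_lt {K : Type*} [Field K] {Γ : Type*} [AddCommGroup Γ] [LinearOrder Γ] [IsOrderedAddMonoid Γ]
    (v : K → WithTop Γ)
    (hv0 : ∀ x : K, v x = ⊤ ↔ x = 0)
    (hvadd : ∀ x y : K, min (v x) (v y) ≤ v (x + y))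
    {ι : Type*} (s : Finset ι) (a : ι → K) (c : WithTop Γ) (hc : c < ⊤)
    (h : ∀ i ∈ s, c < v (a i)) : c < v (∑ i ∈ s, a i) := by
  induction s using Finset.cons_induction with
  | empty => simpa [(hv0 0).mpr rfl] using hc
  | cons j s hj ih =>
    rw [Finset.sum_cons]
    refine lt_of_lt_of_le ?_ (hvadd _ _)
    exact lt_min (h j (Finset.mem_cons_self _ _))
      (ih fun i hi => h i (Finset.mem_cons_of_mem hi))

/-- If `x_1, …, x_n` are not all zero and
`v(x_1 + … + x_n) = min_i v(x_i)`, then for every `y`: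
`rv_δ(y) = rv_δ(x_1 + … + x_n)` iff there are `x_i′` with `rv_δ(x_i′) = rv_δ(x_i)`
for each `i` and `rv_δ(x_1′ + … + x_n′) = rv_δ(y)`. -/
theorem stmt_3 {K : Type*} [Field K] {Γ : Type*} [AddCommGroup Γ] [LinearOrder Γ] [IsOrderedAddMonoid Γ]
    (v : K → WithTop Γ) (hsurj : Function.Surjective v)
    (hv0 : ∀ x : K, v x = ⊤ ↔ x = 0)
    (hvmul : ∀ x y : K, v (x * y) = v x + v y)
    (hvadd : ∀ x y : K, min (v x) (v y) ≤ v (x + y))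
    (δ : Γ) (hδ : 0 ≤ δ) (n : ℕ) (x : Fin n → K)
    (hne : ∃ i, x i ≠ 0)
    (hmin : v (∑ i, x i) =
      Finset.univ.inf' ⟨hne.choose, Finset.mem_univ _⟩ (fun i => v (x i)))
    (y : K) :
    RvEq v (δ : WithTop Γ) y (∑ i, x i) ↔
      ∃ x' : Fin n → K, (∀ i, RvEq v (δ : WithTop Γ) (x' i) (x i)) ∧
        RvEq v (δ : WithTop Γ) (∑ i, x' i) y := by
  set S := ∑ i, x i with hSdef
  have hvne : ∀ a : K, a ≠ 0 → v a ≠ ⊤ := fun a ha h => ha ((hv0 a).mp h)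
  have hδ' : (0 : WithTop Γ) ≤ (δ : WithTop Γ) := by exact_mod_cast hδ
  -- v 1 = 0
  have hv1 : v 1 = 0 := by
    have h1 : v 1 + v 1 = v 1 := by simpa using (hvmul 1 1).symm
    obtain ⟨g, hg⟩ := WithTop.ne_top_iff_exists.mp (hvne 1 one_ne_zero)
    rw [← hg] at h1
    have hgg : g + g = g := by exact_mod_cast h1
    have hg0 : g = 0 := by
      have := add_right_cancel (b := g) (a := g) (c := 0) (by rw [zero_add]; exact hgg)
      exact this
    rw [← hg, hg0]; rfl
  -- v (-a) = v a
  have hvneg : ∀ a : K, v (-a) = v a := by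
    have hm1 : v (-1 : K) = 0 := by
      have h1 : v (-1 : K) + v (-1 : K) = 0 := by
        have := hvmul (-1 : K) (-1); rw [neg_mul_neg, one_mul, hv1] at this
        exact this.symm
      obtain ⟨g, hg⟩ := WithTop.ne_top_iff_exists.mp (hvne (-1 : K) (by norm_num))
      rw [← hg] at h1 ⊢
      have hgg : g + g = 0 := by exact_mod_cast h1
      have hg0 : g = 0 := by
        rcases lt_trichotomy g 0 with h|h|h
        · exact absurd hgg (ne_of_lt (by simpa using add_lt_add h h))
        · exact h
        · exact absurd hgg (ne_of_gt (by simpa using add_lt_add h h))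
      rw [hg0]; rfl
    intro a
    rw [show -a = (-1 : K) * a by ring, hvmul, hm1, zero_add]
  -- S ≠ 0
  have hminle : ∀ i, v S ≤ v (x i) := by
    intro i
    rw [hSdef, hmin]
    exact Finset.inf'_le _ (Finset.mem_univ i)
  have hSne : S ≠ 0 := by
    intro h
    have := hminle hne.choose
    rw [h, (hv0 0).mpr rfl, top_le_iff] at this
    exact hne.choose_spec ((hv0 _).mp this)
  have hvStop : v S ≠ ⊤ := hvne S hSne
  have hctop : v S + (δ : WithTop Γ) < ⊤ :=
    lt_top_iff_ne_top.mpr (WithTop.add_ne_top.mpr ⟨hvStop, WithTop.coe_ne_top⟩)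
  -- if v b + δ < v (a - b) with b ≠ 0, then v a = v b
  have hveq : ∀ a b : K, b ≠ 0 → v b + (δ : WithTop Γ) < v (a - b) → v a = v b := by
    intro a b hb h
    have hbab : v b ≤ v (a - b) := le_trans (le_add_of_nonneg_right hδ') h.le
    have h1 : v b ≤ v a := by
      have h3 := hvadd (a - b) b
      rw [sub_add_cancel, min_eq_right hbab] at h3
      exact h3
    refine le_antisymm ?_ h1
    by_contra hlt
    push_neg at hlt
    have hba : v b < v (b - a) := by
      rw [show b - a = -(a - b) by ring, hvneg]
      exact lt_of_le_of_lt (le_add_of_nonneg_right hδ') h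
    have h3 := hvadd a (b - a)
    rw [show a + (b - a) = b by ring] at h3
    exact absurd (lt_of_lt_of_le (lt_min hlt hba) h3) (lt_irrefl _)
  constructor
  · rintro (⟨hy0, hS0⟩ | ⟨hy0, hS0, hlt⟩)
    · exact absurd hS0 hSne
    · refine ⟨fun i => y * S⁻¹ * x i, ?_, ?_⟩
      · intro i
        by_cases hxi : x i = 0
        · left; simp [hxi]
        · right
          refine ⟨mul_ne_zero (mul_ne_zero hy0 (inv_ne_zero hSne)) hxi, hxi, ?_⟩
          have key : y * S⁻¹ * x i - x i = (y - S) * S⁻¹ * x i := by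
            field_simp
          rw [key, hvmul, hvmul]
          have hinv : v S + v S⁻¹ = 0 := by
            rw [← hvmul, mul_inv_cancel₀ hSne, hv1]
          have hfin : v S⁻¹ + v (x i) ≠ ⊤ := by
            refine WithTop.add_ne_top.mpr ⟨hvne _ (inv_ne_zero hSne), hvne _ hxi⟩
          have step : (v S + (δ : WithTop Γ)) + (v S⁻¹ + v (x i)) <
              v (y - S) + (v S⁻¹ + v (x i)) :=
            WithTop.add_lt_add_right hfin hlt
          have hEq : (v S + (δ : WithTop Γ)) + (v S⁻¹ + v (x i)) =
              v (x i) + (δ : WithTop Γ) := by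
            rw [show (v S + (δ : WithTop Γ)) + (v S⁻¹ + v (x i)) =
              (v S + v S⁻¹) + (v (x i) + (δ : WithTop Γ)) by abel, hinv, zero_add]
          rw [hEq] at step
          calc v (x i) + (δ : WithTop Γ) < v (y - S) + (v S⁻¹ + v (x i)) := step
            _ = v (y - S) + v S⁻¹ + v (x i) := by rw [add_assoc]
      · have hsum : ∑ i, y * S⁻¹ * x i = y := by
          rw [← Finset.mul_sum, ← hSdef]
          field_simp
        rw [hsum]
        right
        refine ⟨hy0, hy0, ?_⟩
        rw [sub_self, (hv0 0).mpr rfl]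
        exact lt_top_iff_ne_top.mpr (WithTop.add_ne_top.mpr ⟨hvne y hy0, WithTop.coe_ne_top⟩)
  · rintro ⟨x', h1, h2⟩
    set S' := ∑ i, x' i with hS'def
    have hA : v S + (δ : WithTop Γ) < v (S' - S) := by
      have hsplit : S' - S = ∑ i, (x' i - x i) := by
        rw [hS'def, hSdef, Finset.sum_sub_distrib]
      rw [hsplit]
      refine aux_sum_lt v hv0 hvadd _ _ _ hctop ?_
      intro i _
      rcases h1 i with ⟨h0, h0'⟩ | ⟨_, _, hc⟩
      · rw [h0, h0', sub_self, (hv0 0).mpr rfl]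
        exact hctop
      · exact lt_of_le_of_lt (add_le_add_left (hminle i) _) hc
    have hS'ne : S' ≠ 0 := by
      intro h
      rw [h, zero_sub, hvneg] at hA
      exact absurd hA (not_lt.mpr (le_add_of_nonneg_right hδ'))
    rcases h2 with ⟨h0, _⟩ | ⟨_, hy0, hlt2⟩
    · exact absurd h0 hS'ne
    have hvS'S : v S' = v S := hveq S' S hSne hA
    have hvS'y : v S' = v y := hveq S' y hy0 hlt2
    right
    refine ⟨hy0, hSne, ?_⟩
    have hsplit : y - S = (y - S') + (S' - S) := by ring
    rw [hsplit]
    refine lt_of_lt_of_le (lt_min ?_ hA) (hvadd _ _)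
    rw [show y - S' = -(S' - y) by ring, hvneg]
    calc v S + (δ : WithTop Γ) = v y + (δ : WithTop Γ) := by rw [← hvS'S, hvS'y]
      _ < v (S' - y) := hlt2
end

section
/- Let δ ∈ Γ with δ ≥ 0, let x_1, …, x_n ∈ K with x_1 + … + x_n ≠ 0 and some x_i ≠ 0, and suppose ε := v(x_1 + … + x_n) − min_i v(x_i) satisfies ε > 0. Let γ ∈ Γ with γ ≥ δ + ε. If x_1′, …, x_n′ ∈ K satisfy rv_γ(x_i′) = rv_γ(x_i) for each i and z = x_1′ + … + x_n′, then rv_δ(z) = rv_δ(x_1 + … + x_n). -/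
/-- Suppose `x_1 + … + x_n ≠ 0`, some `x_i ≠ 0`, and
`ε := v(x_1 + … + x_n) − min_i v(x_i) > 0`.  If `γ ≥ δ + ε`,
`rv_γ(x_i′) = rv_γ(x_i)` for each `i`, and `z = x_1′ + … + x_n′`, then
`rv_δ(z) = rv_δ(x_1 + … + x_n)`. -/
theorem stmt_4 {K : Type*} [Field K] {Γ : Type*} [AddCommGroup Γ] [LinearOrder Γ] [IsOrderedAddMonoid Γ]
    (v : K → WithTop Γ) (hsurj : Function.Surjective v)
    (hv0 : ∀ x : K, v x = ⊤ ↔ x = 0)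
    (hvmul : ∀ x y : K, v (x * y) = v x + v y)
    (hvadd : ∀ x y : K, min (v x) (v y) ≤ v (x + y))
    (δ : Γ) (hδ : 0 ≤ δ) (n : ℕ) (x : Fin n → K)
    (hne : ∃ i, x i ≠ 0) (hsum : ∑ i, x i ≠ 0)
    (ε : Γ) (hεpos : 0 < ε)
    (hε : v (∑ i, x i) =
      Finset.univ.inf' ⟨hne.choose, Finset.mem_univ _⟩ (fun i => v (x i)) + (ε : WithTop Γ))
    (γ : Γ) (hγ : δ + ε ≤ γ)
    (x' : Fin n → K) (z : K)
    (hx' : ∀ i, RvEq v (γ : WithTop Γ) (x' i) (x i))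
    (hz : z = ∑ i, x' i) :
    RvEq v (δ : WithTop Γ) z (∑ i, x i) := by
  classical
  set S := ∑ i, x i with hS
  set M := Finset.univ.inf' ⟨hne.choose, Finset.mem_univ _⟩ (fun i => v (x i)) with hM
  have hv0' : v (0 : K) = ⊤ := (hv0 0).2 rfl
  have hvS : v S ≠ ⊤ := fun h => hsum ((hv0 S).1 h)
  have hSδ : v S + (δ : WithTop Γ) < ⊤ := by
    refine WithTop.add_lt_top.2 ⟨lt_top_iff_ne_top.2 hvS, WithTop.coe_lt_top δ⟩
  -- v(1) = 0
  have h1 : v (1 : K) = 0 := by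
    have hmm := hvmul 1 1
    rw [one_mul] at hmm
    obtain ⟨a, ha⟩ := WithTop.ne_top_iff_exists.1 (fun h => one_ne_zero ((hv0 (1:K)).1 h))
    rw [← ha] at hmm ⊢
    have hGa : a = a + a := by exact_mod_cast hmm
    have ha0 : a = 0 := add_right_cancel (a := a) (by rw [zero_add]; exact hGa.symm)
    rw [ha0]; rfl
  have hneg : ∀ y : K, v (-y) = v y := by
    intro y
    have hm1 : v (-1 : K) = 0 := by
      have hmm := hvmul (-1) (-1)
      rw [neg_mul_neg, one_mul, h1] at hmm
      obtain ⟨a, ha⟩ := WithTop.ne_top_iff_exists.1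
        (fun h => (neg_ne_zero.2 (one_ne_zero : (1:K) ≠ 0)) ((hv0 (-1:K)).1 h))
      rw [← ha] at hmm ⊢
      have ha2 : a + a = (0 : Γ) := by exact_mod_cast hmm.symm
      have ha0 : a = 0 := by
        rcases lt_trichotomy a 0 with h | h | h
        · exact absurd ha2 (ne_of_lt (by simpa using add_lt_add h h))
        · exact h
        · exact absurd ha2 (ne_of_gt (by simpa using add_lt_add h h))
      rw [ha0]; rfl
    have := hvmul (-1) y
    rw [neg_one_mul, hm1, zero_add] at this
    exact this
  -- sum lemma
  have sum_lt : ∀ (t : Finset (Fin n)) (f : Fin n → K) (c : WithTop Γ), c < ⊤ →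
      (∀ i ∈ t, c < v (f i)) → c < v (∑ i ∈ t, f i) := by
    intro t f c hc
    induction t using Finset.induction_on with
    | empty => intro _; simpa [hv0'] using hc
    | insert a s hnotmem ih =>
      intro hall
      rw [Finset.sum_insert hnotmem]
      refine lt_of_lt_of_le ?_ (hvadd _ _)
      exact lt_min (hall _ (Finset.mem_insert_self _ _))
        (ih fun i hi => hall i (Finset.mem_insert_of_mem hi))
  have key : ∀ i, v S + (δ : WithTop Γ) < v (x' i - x i) := by
    intro i
    rcases hx' i with ⟨h1', h2'⟩ | ⟨h1', h2', h3'⟩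
    · rw [h1', h2', sub_zero, hv0']; exact hSδ
    · refine lt_of_le_of_lt ?_ h3'
      have hMle : M ≤ v (x i) := Finset.inf'_le _ (Finset.mem_univ i)
      calc v S + (δ : WithTop Γ) = M + ((ε : WithTop Γ) + δ) := by rw [hε, add_assoc]
        _ ≤ M + (γ : WithTop Γ) := by
            refine add_le_add_right ?_ M
            rw [← WithTop.coe_add]
            exact_mod_cast (add_comm ε δ ▸ hγ)
        _ ≤ v (x i) + (γ : WithTop Γ) := add_le_add_left hMle _
  have hdiff : v S + (δ : WithTop Γ) < v (z - S) := by
    rw [hz, hS, ← Finset.sum_sub_distrib]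
    exact sum_lt _ _ _ hSδ (fun i _ => key i)
  have hzne : z ≠ 0 := by
    intro h
    rw [h, zero_sub, hneg] at hdiff
    have : v S ≤ v S + (δ : WithTop Γ) :=
      le_add_of_nonneg_right (by exact_mod_cast hδ)
    exact absurd (lt_of_le_of_lt this hdiff) (lt_irrefl _)
  exact Or.inr ⟨hzne, hsum, hdiff⟩
end

section
/- Let x, y ∈ K with x ≠ 0, x + y ≠ 0, and v(x) ≤ v(x + y), and let γ ∈ Γ with γ ≥ v(x + y) − v(x). Suppose z_1 = x_1′ + y_1′ and z_2 = x_2′ + y_2′, where rv_γ(x_j′) = rv_γ(x) and rv_γ(y_j′) = rv_γ(y) for j = 1, 2. Then v(z_1) = v(z_2). -/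
section Aux

variable {K : Type*} [Field K] {Γ : Type*} [AddCommGroup Γ] [LinearOrder Γ] [IsOrderedAddMonoid Γ]
    (v : K → WithTop Γ)
    (hv0 : ∀ x : K, v x = ⊤ ↔ x = 0)
    (hvmul : ∀ x y : K, v (x * y) = v x + v y)
    (hvadd : ∀ x y : K, min (v x) (v y) ≤ v (x + y))

include hv0 hvmul in
lemma aux_v_neg (a : K) : v (-a) = v a := by
  have hone : v (1 : K) = 0 := by
    have h := hvmul 1 1
    rw [one_mul] at h
    obtain ⟨b, hb⟩ := WithTop.ne_top_iff_exists.mp (by simp [hv0] : v (1 : K) ≠ ⊤)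
    rw [← hb] at h ⊢
    rw [← WithTop.coe_add, WithTop.coe_eq_coe] at h
    exact_mod_cast left_eq_add.mp h
  have hm : v (-1 : K) = 0 := by
    have h := hvmul (-1) (-1)
    rw [neg_mul_neg, one_mul, hone] at h
    obtain ⟨b, hb⟩ := WithTop.ne_top_iff_exists.mp
      (by simp [hv0] : v (-1 : K) ≠ ⊤)
    rw [← hb] at h ⊢
    rw [← WithTop.coe_add] at h
    have : b + b = 0 := by exact_mod_cast h.symm
    have : b = 0 := by
      rcases lt_trichotomy b 0 with h' | h' | h'
      · have h2 := add_lt_add h' h'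
        rw [this, add_zero] at h2
        exact absurd h2 (lt_irrefl 0)
      · exact h'
      · have h2 := add_lt_add h' h'
        rw [this, add_zero] at h2
        exact absurd h2 (lt_irrefl 0)
    exact_mod_cast this
  have := hvmul (-1) a
  rw [neg_one_mul, hm, zero_add] at this
  exact this

include hv0 hvmul hvadd in
lemma aux_key (z w : K) (h : v w < v (z - w)) : v z = v w := by
  have h1 : v w ≤ v z := by
    have := hvadd (z - w) w
    rw [sub_add_cancel] at this
    exact le_trans (le_min h.le le_rfl) this
  have h2 : v z ≤ v w := by
    by_contra hc
    push_neg at hc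
    have hsub : v (w - z) = v (z - w) := by
      rw [← neg_sub, aux_v_neg v hv0 hvmul]
    have := hvadd (w - z) z
    rw [sub_add_cancel] at this
    rw [hsub] at this
    exact absurd this (not_le.mpr (lt_min h hc))
  exact le_antisymm h2 h1

end Aux

/-- If `x ≠ 0`, `x + y ≠ 0`, `v(x) ≤ v(x + y)`, and
`γ ≥ v(x + y) − v(x)` (i.e. `v(x+y) ≤ v(x) + γ`), and `z_j = x_j′ + y_j′` with
`rv_γ(x_j′) = rv_γ(x)` and `rv_γ(y_j′) = rv_γ(y)` for `j = 1, 2`,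
then `v(z_1) = v(z_2)`. -/
theorem stmt_5 {K : Type*} [Field K] {Γ : Type*} [AddCommGroup Γ] [LinearOrder Γ] [IsOrderedAddMonoid Γ]
    (v : K → WithTop Γ) (hsurj : Function.Surjective v)
    (hv0 : ∀ x : K, v x = ⊤ ↔ x = 0)
    (hvmul : ∀ x y : K, v (x * y) = v x + v y)
    (hvadd : ∀ x y : K, min (v x) (v y) ≤ v (x + y))
    (x y : K) (hx : x ≠ 0) (hxy : x + y ≠ 0) (hle : v x ≤ v (x + y))
    (γ : Γ) (hγ : v (x + y) ≤ v x + (γ : WithTop Γ))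
    (x1 y1 x2 y2 z1 z2 : K)
    (hx1 : RvEq v (γ : WithTop Γ) x1 x) (hy1 : RvEq v (γ : WithTop Γ) y1 y)
    (hx2 : RvEq v (γ : WithTop Γ) x2 x) (hy2 : RvEq v (γ : WithTop Γ) y2 y)
    (hz1 : z1 = x1 + y1) (hz2 : z2 = x2 + y2) :
    v z1 = v z2 := by
  -- v y ≥ v x
  have hvy : v x ≤ v y := by
    have h := hvadd (x + y) (-x)
    rw [add_neg_cancel_comm, aux_v_neg v hv0 hvmul] at h
    exact le_trans (le_min hle le_rfl) h
  have hγy : v (x + y) ≤ v y + (γ : WithTop Γ) :=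
    le_trans hγ (add_le_add_left hvy _)
  have hxytop : v (x + y) ≠ ⊤ := fun h => hxy ((hv0 _).mp h)
  -- main step
  have main : ∀ x' y' : K, RvEq v (γ : WithTop Γ) x' x →
      RvEq v (γ : WithTop Γ) y' y → v (x' + y') = v (x + y) := by
    intro x' y' hx' hy'
    apply aux_key v hv0 hvmul hvadd
    have hdx : v (x + y) < v (x' - x) := by
      rcases hx' with ⟨_, h⟩ | ⟨_, _, h⟩
      · exact absurd h hx
      · exact lt_of_le_of_lt hγ h
    have hdy : v (x + y) < v (y' - y) := by
      rcases hy' with ⟨h1, h2⟩ | ⟨_, _, h⟩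
      · have ht : v (y' - y) = ⊤ := by rw [h1, h2, sub_zero]; exact (hv0 0).mpr rfl
        rw [ht]
        exact lt_of_le_of_ne le_top hxytop
      · exact lt_of_le_of_lt hγy h
    have : x' + y' - (x + y) = (x' - x) + (y' - y) := by ring
    rw [this]
    exact lt_of_lt_of_le (lt_min hdx hdy) (hvadd _ _)
  rw [hz1, hz2, main x1 y1 hx1 hy1, main x2 y2 hx2 hy2]
end

section
/- Let x, y, z ∈ K with x ≠ 0, let γ ∈ Γ with 0 ≤ γ and γ < v(x + y) − v(x), and suppose v(z) > v(x) + γ. Then there exist x′, y′ ∈ K with rv_γ(x′) = rv_γ(x), rv_γ(y′) = rv_γ(y), and x′ + y′ = z. -/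
/-- If `x ≠ 0`, `0 ≤ γ < v(x + y) − v(x)` (i.e. `v(x) + γ < v(x+y)`),
and `v(z) > v(x) + γ`, then there are `x′, y′` with `rv_γ(x′) = rv_γ(x)`,
`rv_γ(y′) = rv_γ(y)`, and `x′ + y′ = z`. -/
theorem stmt_6 {K : Type*} [Field K] {Γ : Type*} [AddCommGroup Γ] [LinearOrder Γ] [IsOrderedAddMonoid Γ]
    (v : K → WithTop Γ) (hsurj : Function.Surjective v)
    (hv0 : ∀ x : K, v x = ⊤ ↔ x = 0)
    (hvmul : ∀ x y : K, v (x * y) = v x + v y)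
    (hvadd : ∀ x y : K, min (v x) (v y) ≤ v (x + y))
    (x y z : K) (hx : x ≠ 0) (γ : Γ) (hγ0 : 0 ≤ γ)
    (hγ : v x + (γ : WithTop Γ) < v (x + y))
    (hz : v x + (γ : WithTop Γ) < v z) :
    ∃ x' y' : K, RvEq v (γ : WithTop Γ) x' x ∧ RvEq v (γ : WithTop Γ) y' y ∧
      x' + y' = z := by
  -- v 1 = 0
  have hv1 : v 1 = 0 := by
    have h := hvmul 1 1
    rw [one_mul] at h
    rcases eq_or_ne (v 1) ⊤ with ht | ht
    · exact absurd ((hv0 1).mp ht) one_ne_zero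
    · lift v 1 to Γ using ht with a
      norm_cast at h ⊢
      exact (add_left_cancel (a := a) (by rw [add_zero]; exact h)).symm
  -- v (-t) = v t
  have hvneg : ∀ t : K, v (-t) = v t := by
    have hm1 : v (-1 : K) = 0 := by
      have h := hvmul (-1) (-1)
      rw [neg_mul_neg, one_mul, hv1] at h
      rcases eq_or_ne (v (-1 : K)) ⊤ with ht | ht
      · exact absurd ((hv0 _).mp ht) (by norm_num)
      · lift v (-1 : K) to Γ using ht with a
        norm_cast at h ⊢
        rcases lt_trichotomy a 0 with hl | he | hg
        · exact absurd h (ne_of_lt (by simpa using add_lt_add hl hl))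
        · exact he
        · exact absurd h (ne_of_gt (by simpa using add_lt_add hg hg))
    intro t
    have := hvmul (-1) t
    rw [neg_one_mul, hm1, zero_add] at this
    exact this
  have hvsub : ∀ a b : K, min (v a) (v b) ≤ v (a - b) := by
    intro a b
    have := hvadd a (-b)
    rwa [hvneg b, ← sub_eq_add_neg] at this
  have hxtop : v x ≠ ⊤ := fun h => hx ((hv0 x).mp h)
  have hγle : v x ≤ v x + (γ : WithTop Γ) := le_add_of_nonneg_right (by exact_mod_cast hγ0)
  have hxlt : v x < v (x + y) := lt_of_le_of_lt hγle hγ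
  -- v y = v x
  have hvyx : v y = v x := by
    have h1 : v x ≤ v y := by
      have := hvsub (x + y) x
      rw [add_sub_cancel_left] at this
      exact le_trans (le_min hxlt.le le_rfl) this
    have h2 : v y ≤ v x := by
      by_contra h
      push_neg at h
      have := hvsub (x + y) y
      rw [add_sub_cancel_right] at this
      exact absurd (lt_of_lt_of_le (lt_min hxlt h) this) (lt_irrefl _)
    exact le_antisymm h2 h1
  have hy0 : y ≠ 0 := fun h => hxtop (hvyx ▸ (hv0 y).mpr h)
  -- x' = x, y' = z - x
  refine ⟨x, z - x, Or.inr ⟨hx, hx, ?_⟩, Or.inr ⟨?_, hy0, ?_⟩, by ring⟩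
  · rw [sub_self]
    rw [(hv0 (0 : K)).mpr rfl]
    exact lt_of_le_of_ne le_top (by simp [WithTop.add_ne_top, hxtop])
  · intro h
    have hzx : z = x := by linear_combination h
    rw [hzx] at hz
    exact absurd (lt_of_le_of_lt hγle hz) (lt_irrefl _)
  · have : v (z - x - y) = v (z - (x + y)) := by ring_nf
    rw [hvyx, this]
    calc v x + (γ : WithTop Γ) < min (v z) (v (x + y)) := lt_min hz hγ
      _ ≤ v (z - (x + y)) := hvsub z (x + y)
end

section
/- Suppose K is henselian. Let P be a polynomial with coefficients in the valuation ring 𝒪, let a ∈ 𝒪, and let δ ∈ Γ with δ ≥ 0. If v(P(a)) > 2·v(P′(a)) + δ, then there exists b ∈ 𝒪 with P(b) = 0 and v(a − b) > δ. -/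
open Polynomial Finset

-- helper lemmas, test compile
lemma my_sum_split {M : Type*} [AddCommMonoid M] (f : ℕ → M) {n : ℕ} (hn : 1 ≤ n) :
    ∑ i ∈ range (n+1), f i = f 0 + f 1 + ∑ i ∈ Icc 2 n, f i := by
  have h1 : Icc 2 n = Ico 2 (n+1) := by rw [Finset.Ico_add_one_right_eq_Icc]
  rw [range_eq_Ico, ← Finset.sum_Ico_consecutive f (Nat.zero_le 2) (by omega), h1]
  congr 1
  show ∑ i ∈ range 2, f i = f 0 + f 1
  rw [Finset.sum_range_succ, Finset.sum_range_one]

section V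
variable {K : Type*} [Field K] {Γ : Type*} [AddCommGroup Γ] [LinearOrder Γ] [IsOrderedAddMonoid Γ]
    (v : K → WithTop Γ)
    (hv0 : ∀ x : K, v x = ⊤ ↔ x = 0)
    (hvmul : ∀ x y : K, v (x * y) = v x + v y)

include hv0 hvmul

lemma my_v_one : v 1 = 0 := by
  have h := hvmul 1 1
  rw [mul_one] at h
  obtain ⟨γ, hγ⟩ : ∃ γ : Γ, v 1 = ↑γ := by
    cases hh : v 1 with
    | top => exact absurd ((hv0 1).mp hh) one_ne_zero
    | coe γ => exact ⟨γ, rfl⟩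
  rw [hγ, ← WithTop.coe_add, WithTop.coe_eq_coe] at h
  rw [hγ]
  norm_cast
  exact (left_eq_add.mp h)

lemma my_v_neg (x : K) : v (-x) = v x := by
  have hm1 : v (-1 : K) = 0 := by
    have h := hvmul (-1) (-1)
    rw [neg_mul_neg, one_mul, my_v_one v hv0 hvmul] at h
    obtain ⟨γ, hγ⟩ : ∃ γ : Γ, v (-1 : K) = ↑γ := by
      cases hh : v (-1 : K) with
      | top => exact absurd ((hv0 _).mp hh) (by norm_num)
      | coe γ => exact ⟨γ, rfl⟩
    rw [hγ] at h ⊢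
    norm_cast at h ⊢
    by_contra hne
    rcases lt_or_gt_of_ne hne with hlt | hlt
    · have h3 : γ + γ < 0 + 0 := add_lt_add hlt hlt
      rw [h, add_zero] at h3; exact lt_irrefl _ h3
    · have h3 : (0:Γ) + 0 < γ + γ := add_lt_add hlt hlt
      rw [h, add_zero] at h3; exact lt_irrefl _ h3
  calc v (-x) = v ((-1) * x) := by rw [neg_one_mul]
  _ = v x := by rw [hvmul, hm1, zero_add]

lemma my_v_inv {x : K} (hx : x ≠ 0) : v x + v x⁻¹ = 0 := by
  rw [← hvmul, mul_inv_cancel₀ hx, my_v_one v hv0 hvmul]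

lemma my_v_pow {x : K} {γ : Γ} (h : v x = ↑γ) (k : ℕ) : v (x ^ k) = ↑(k • γ) := by
  induction k with
  | zero => simpa using my_v_one v hv0 hvmul
  | succ m ih =>
      rw [pow_succ, hvmul, ih, h, ← WithTop.coe_add, succ_nsmul]

end V

section O
variable {K : Type*} [Field K] {Γ : Type*} [AddCommGroup Γ] [LinearOrder Γ] [IsOrderedAddMonoid Γ]
    (v : K → WithTop Γ)
    (hv0 : ∀ x : K, v x = ⊤ ↔ x = 0)
    (hvmul : ∀ x y : K, v (x * y) = v x + v y)
    (O : Subring K) (hO : ∀ x : K, x ∈ O ↔ 0 ≤ v x)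

include hv0 hvmul hO

lemma my_unit_iff (x : O) : IsUnit x ↔ v (x : K) = 0 := by
  constructor
  · rintro ⟨u, rfl⟩
    have h1 : ((u : O) : K) * (((u⁻¹ : Oˣ) : O) : K) = 1 := by
      norm_cast
      simp
    have h2 := hvmul ((u : O) : K) (((u⁻¹ : Oˣ) : O) : K)
    rw [h1, my_v_one v hv0 hvmul] at h2
    have hx : (0 : WithTop Γ) ≤ v ((u : O) : K) := (hO _).mp (u : O).2
    have hy : (0 : WithTop Γ) ≤ v (((u⁻¹ : Oˣ) : O) : K) := (hO _).mp ((u⁻¹ : Oˣ) : O).2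
    by_contra hne
    have hlt : (0 : WithTop Γ) < v ((u : O) : K) := lt_of_le_of_ne hx (Ne.symm hne)
    have : (0 : WithTop Γ) < v ((u : O) : K) + v (((u⁻¹ : Oˣ) : O) : K) := by
      calc (0 : WithTop Γ) < v ((u : O) : K) := hlt
      _ = v ((u : O) : K) + 0 := (add_zero _).symm
      _ ≤ _ := add_le_add_right hy _
    rw [← h2] at this
    exact lt_irrefl _ this
  · intro hx
    have hx0 : (x : K) ≠ 0 := by
      intro h0
      rw [h0] at hx
      rw [(hv0 0).mpr rfl] at hx
      exact (WithTop.coe_ne_top (a := (0:Γ))) hx.symm |>.elim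
    have hinv : v ((x : K)⁻¹) = 0 := by
      have := my_v_inv v hv0 hvmul hx0
      rw [hx, zero_add] at this
      exact this
    have hmem : (x : K)⁻¹ ∈ O := (hO _).mpr (le_of_eq hinv.symm)
    refine isUnit_iff_exists_inv.mpr ⟨⟨(x : K)⁻¹, hmem⟩, ?_⟩
    ext
    push_cast
    exact mul_inv_cancel₀ hx0

omit hv0 hvmul hO in
lemma my_eval_mem (p : Polynomial K) (hp : ∀ i, p.coeff i ∈ O) {x : K} (hx : x ∈ O) :
    p.eval x ∈ O := by
  rw [Polynomial.eval_eq_sum_range]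
  exact Subring.sum_mem O fun i _ => Subring.mul_mem O (hp i) (Subring.pow_mem O hx i)

end O

section V2
variable {K : Type*} [Field K] {Γ : Type*} [AddCommGroup Γ] [LinearOrder Γ] [IsOrderedAddMonoid Γ]
    (v : K → WithTop Γ)
    (hv0 : ∀ x : K, v x = ⊤ ↔ x = 0)
    (hvmul : ∀ x y : K, v (x * y) = v x + v y)

include hv0 hvmul

omit [AddCommGroup Γ] [LinearOrder Γ] [IsOrderedAddMonoid Γ] hvmul in
lemma my_v_ne_top {x : K} (hx : x ≠ 0) : ∃ γ : Γ, v x = ↑γ := by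
  cases hh : v x with
  | top => exact absurd ((hv0 _).mp hh) hx
  | coe γ => exact ⟨γ, rfl⟩

lemma my_v_inv' {x : K} {γ : Γ} (h : v x = ↑γ) : v x⁻¹ = ↑(-γ) := by
  have hx : x ≠ 0 := by
    intro h0; rw [h0, (hv0 0).mpr rfl] at h; exact WithTop.top_ne_coe h
  have h2 := my_v_inv v hv0 hvmul hx
  cases hh : v x⁻¹ with
  | top =>
      rw [hh, h] at h2
      simp at h2
  | coe β =>
      rw [hh, h, ← WithTop.coe_add, show ((0 : WithTop Γ)) = ((0 : Γ) : WithTop Γ) from rfl,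
        WithTop.coe_eq_coe] at h2
      rw [WithTop.coe_eq_coe]
      exact (neg_eq_of_add_eq_zero_right h2).symm

lemma my_v_div {x y : K} {α β : Γ} (hx : v x = ↑α) (hy : v y = ↑β) :
    v (x / y) = ↑(α - β) := by
  rw [div_eq_mul_inv, hvmul, hx, my_v_inv' v hv0 hvmul hy, ← WithTop.coe_add, sub_eq_add_neg]

end V2

/-- If `K` is henselian, `P ∈ 𝒪[x]`, `a ∈ 𝒪`, `δ ≥ 0`, and
`v(P(a)) > 2·v(P′(a)) + δ`, then there is `b ∈ 𝒪` with `P(b) = 0` and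
`v(a − b) > δ`. -/
theorem stmt_8 {K : Type*} [Field K] {Γ : Type*} [AddCommGroup Γ] [LinearOrder Γ] [IsOrderedAddMonoid Γ]
    (v : K → WithTop Γ) (hsurj : Function.Surjective v)
    (hv0 : ∀ x : K, v x = ⊤ ↔ x = 0)
    (hvmul : ∀ x y : K, v (x * y) = v x + v y)
    (hvadd : ∀ x y : K, min (v x) (v y) ≤ v (x + y))
    (O : Subring K) (hO : ∀ x : K, x ∈ O ↔ 0 ≤ v x) [HenselianLocalRing O]
    (P : Polynomial K) (hP : ∀ i, P.coeff i ∈ O)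
    (a : K) (ha : a ∈ O) (δ : Γ) (hδ : 0 ≤ δ)
    (hcond : v (P.derivative.eval a) + v (P.derivative.eval a) + (δ : WithTop Γ)
      < v (P.eval a)) :
    ∃ b : K, b ∈ O ∧ P.eval b = 0 ∧ (δ : WithTop Γ) < v (a - b) := by
  classical
  by_cases hPa : P.eval a = 0
  · refine ⟨a, ha, hPa, ?_⟩
    rw [sub_self, (hv0 0).mpr rfl]
    exact WithTop.coe_lt_top δ
  set e := P.eval a with he
  set c := P.derivative.eval a with hc
  have hc0 : c ≠ 0 := by
    intro h0
    rw [h0, (hv0 0).mpr rfl] at hcond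
    simp at hcond
  have heO : e ∈ O := my_eval_mem O P hP ha
  have hderO : ∀ i, P.derivative.coeff i ∈ O := by
    intro i
    rw [Polynomial.coeff_derivative]
    exact Subring.mul_mem O (hP _) (by exact_mod_cast natCast_mem O (i+1))
  have hcO : c ∈ O := my_eval_mem O _ hderO ha
  obtain ⟨γe, hγe⟩ := my_v_ne_top v hv0 hPa
  obtain ⟨γc, hγc⟩ := my_v_ne_top v hv0 hc0
  have hγc0 : (0:Γ) ≤ γc := by
    have := (hO c).mp hcO
    rw [hγc] at this
    exact_mod_cast this
  have hkey : γc + γc + δ < γe := by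
    rw [hγe, hγc] at hcond
    exact_mod_cast hcond
  set s : Γ := γe - γc with hs
  have hγcδs : γc + δ < s := by
    rw [hs, lt_sub_iff_add_lt]
    calc γc + δ + γc = γc + γc + δ := by abel
    _ < γe := hkey
  have hγcs : γc < s := lt_of_le_of_lt (le_add_of_nonneg_right hδ) hγcδs
  have hspos : (0:Γ) < s := lt_of_le_of_lt (add_nonneg hγc0 hδ) hγcδs
  have hδs : δ < s := lt_of_le_of_lt (le_add_of_nonneg_left hγc0) hγcδs
  set t : K := e / c with htdef
  have ht : v t = ↑s := my_v_div v hv0 hvmul hγe hγc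
  have ht0 : t ≠ 0 := div_ne_zero hPa hc0
  obtain ⟨n, hn⟩ : ∃ k, P.natDegree = k := ⟨_, rfl⟩
  have hn1 : 1 ≤ n := by
    by_contra hcon
    have h0 : P.natDegree = 0 := by omega
    have := Polynomial.eq_C_of_natDegree_eq_zero h0
    rw [this] at hc
    simp at hc
    exact hc0 hc
  set d : ℕ → K := fun i => (Polynomial.taylor a P).coeff i with hd
  have hdO : ∀ i, d i ∈ O := by
    intro i
    rw [hd]
    simp only [Polynomial.taylor_coeff]
    refine my_eval_mem O _ (fun j => ?_) ha
    rw [Polynomial.hasseDeriv_coeff]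
    exact Subring.mul_mem O (by exact_mod_cast natCast_mem O _) (hP _)
  have hd0 : d 0 = e := by rw [hd]; exact Polynomial.taylor_coeff_zero a P
  have hd1 : d 1 = c := by rw [hd]; exact Polynomial.taylor_coeff_one a P
  set q : ℕ → K := fun i => d i * t ^ i / e with hqdef
  have hq0 : q 0 = 1 := by
    rw [hqdef]; simp only [hd0, pow_zero, mul_one]; exact div_self hPa
  have hq1 : q 1 = 1 := by
    rw [hqdef]; simp only [hd1, pow_one, htdef]
    field_simp
  have hqpos : ∀ i, 2 ≤ i → (0 : WithTop Γ) < v (q i) := by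
    intro i hi
    by_cases hdi : d i = 0
    · have : q i = 0 := by rw [hqdef]; simp [hdi]
      rw [this, (hv0 0).mpr rfl]
      exact WithTop.coe_lt_top 0
    · obtain ⟨γd, hγd⟩ := my_v_ne_top v hv0 hdi
      have hγd0 : (0:Γ) ≤ γd := by
        have := (hO _).mp (hdO i); rw [hγd] at this; exact_mod_cast this
      have hvq : v (q i) = ↑(γd + i • s - γe) := by
        rw [hqdef]
        show v (d i * t ^ i / e) = _
        rw [div_eq_mul_inv, hvmul, hvmul, hγd, my_v_pow v hv0 hvmul ht i,
          my_v_inv' v hv0 hvmul hγe]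
        rw [← WithTop.coe_add, ← WithTop.coe_add, WithTop.coe_eq_coe]
        abel
      rw [hvq]
      rw [show ((0 : WithTop Γ)) = ((0:Γ) : WithTop Γ) from rfl, WithTop.coe_lt_coe]
      have h2s : γe < i • s := by
        calc γe = γc + s := by rw [hs]; abel
        _ < s + s := by exact add_lt_add_left hγcs s
        _ = 2 • s := (two_nsmul s).symm
        _ ≤ i • s := nsmul_le_nsmul_left (le_of_lt hspos) hi
      calc (0:Γ) ≤ γd := hγd0
      _ = γd + 0 := (add_zero _).symm
      _ < γd + (i • s - γe) := by
          refine add_lt_add_right ?_ γd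
          exact sub_pos.mpr h2s
      _ = γd + i • s - γe := by abel
  have hqO : ∀ i, q i ∈ O := by
    intro i
    match i, Nat.lt_or_ge i 2 with
    | 0, _ => rw [hq0]; exact Subring.one_mem O
    | 1, _ => rw [hq1]; exact Subring.one_mem O
    | (k+2), _ =>
      exact (hO _).mpr (le_of_lt (hqpos (k+2) (by omega)))
  set qO : ℕ → O := fun i => ⟨q i, hqO i⟩ with hqOdef
  have hqm : ∀ i, 2 ≤ i → qO i ∈ IsLocalRing.maximalIdeal O := by
    intro i hi
    rw [IsLocalRing.mem_maximalIdeal, mem_nonunits_iff]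
    intro hu
    have := (my_unit_iff v hv0 hvmul O hO (qO i)).mp hu
    rw [hqOdef] at this
    have h2 := hqpos i hi
    rw [this] at h2
    exact lt_irrefl _ h2
  -- the auxiliary polynomial over O
  obtain ⟨m, hm⟩ : ∃ m, n = m + 1 := ⟨n - 1, by omega⟩
  set r : Polynomial O := ∑ i ∈ Icc 2 n, Polynomial.C (qO i) * Polynomial.X ^ (n - i) with hr
  set hpoly : Polynomial O := Polynomial.X ^ n + Polynomial.X ^ (n-1) + r with hpolydef
  have hdegr : r.degree ≤ ((n - 2 : ℕ) : WithBot ℕ) := by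
    rw [hr]
    refine le_trans (Polynomial.degree_sum_le _ _) ?_
    refine Finset.sup_le fun i hi => ?_
    refine le_trans (Polynomial.degree_C_mul_X_pow_le _ _) ?_
    have hii : 2 ≤ i ∧ i ≤ n := by simpa using hi
    have hle : n - i ≤ n - 2 := by omega
    exact_mod_cast hle
  have hmonic : hpoly.Monic := by
    rw [hpolydef, hm, add_assoc]
    refine Polynomial.monic_X_pow_add ?_
    refine lt_of_le_of_lt (Polynomial.degree_add_le _ _) ?_
    rw [max_lt_iff]
    constructor
    · rw [Polynomial.degree_X_pow]
      have : m < m + 1 := by omega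
      exact_mod_cast this
    · refine lt_of_le_of_lt hdegr ?_
      have : n - 2 < m + 1 := by omega
      exact_mod_cast this
  have hrmem : ∀ x : O, r.eval x ∈ IsLocalRing.maximalIdeal O := by
    intro x
    rw [hr, Polynomial.eval_finset_sum]
    refine Ideal.sum_mem _ fun i hi => ?_
    rw [Polynomial.eval_mul, Polynomial.eval_C]
    exact Ideal.mul_mem_right _ _ (hqm i (by simp at hi; exact hi.1))
  have hrdmem : ∀ x : O, r.derivative.eval x ∈ IsLocalRing.maximalIdeal O := by
    intro x
    rw [hr, Polynomial.derivative_sum, Polynomial.eval_finset_sum]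
    refine Ideal.sum_mem _ fun i hi => ?_
    rw [Polynomial.derivative_C_mul, Polynomial.derivative_X_pow, Polynomial.eval_mul,
      Polynomial.eval_C]
    exact Ideal.mul_mem_right _ _ (hqm i (by simp at hi; exact hi.1))
  have heval : hpoly.eval (-1) ∈ IsLocalRing.maximalIdeal O := by
    rw [hpolydef]
    simp only [Polynomial.eval_add, Polynomial.eval_pow, Polynomial.eval_X]
    have hcancel : ((-1 : O)) ^ n + (-1 : O) ^ (n-1) = 0 := by
      rw [hm]
      simp only [Nat.add_sub_cancel, pow_succ]
      ring
    rw [hcancel, zero_add]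
    exact hrmem _
  have hunit : IsUnit (hpoly.derivative.eval (-1)) := by
    have hdd : hpoly.derivative.eval (-1)
        = ((n : O) * (-1)^(n-1) + ((n-1 : ℕ) : O) * (-1)^(n-1-1)) + r.derivative.eval (-1) := by
      rw [hpolydef]
      simp only [Polynomial.derivative_add, Polynomial.derivative_X_pow, Polynomial.eval_add,
        Polynomial.eval_mul, Polynomial.eval_C, Polynomial.eval_pow, Polynomial.eval_X]
    have hmain : ((n : O) * (-1)^(n-1) + ((n-1 : ℕ) : O) * (-1)^(n-1-1)) = (-1 : O)^(n-1) := by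
      rcases Nat.lt_or_ge n 2 with h2 | h2
      · have : n = 1 := by omega
        subst this
        norm_num
      · obtain ⟨k, hk⟩ : ∃ k, n = k + 2 := ⟨n - 2, by omega⟩
        subst hk
        show ((k + 2 : ℕ) : O) * (-1)^(k+1) + ((k + 1 : ℕ) : O) * (-1)^k = (-1 : O)^(k+1)
        push_cast
        ring
    rw [hdd, hmain]
    by_contra hnu
    have hmemm : ((-1 : O)^(n-1) + r.derivative.eval (-1)) ∈ IsLocalRing.maximalIdeal O := by
      rw [IsLocalRing.mem_maximalIdeal]
      exact hnu
    have : ((-1 : O)^(n-1)) ∈ IsLocalRing.maximalIdeal O := by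
      have := Ideal.sub_mem _ hmemm (hrdmem (-1))
      simpa using this
    rw [IsLocalRing.mem_maximalIdeal, mem_nonunits_iff] at this
    exact this ((isUnit_one.neg).pow _)
  obtain ⟨z, hzroot, hzmem⟩ := HenselianLocalRing.is_henselian hpoly hmonic (-1) heval hunit
  have hz1 : z + 1 ∈ IsLocalRing.maximalIdeal O := by
    have : z - (-1) = z + 1 := by ring
    rwa [this] at hzmem
  have hzunit : IsUnit z := by
    by_contra hnu
    have hzm : z ∈ IsLocalRing.maximalIdeal O := by
      rw [IsLocalRing.mem_maximalIdeal]; exact hnu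
    have h1m : (1 : O) ∈ IsLocalRing.maximalIdeal O := by
      have := Ideal.sub_mem _ hz1 hzm
      simpa using this
    rw [IsLocalRing.mem_maximalIdeal, mem_nonunits_iff] at h1m
    exact h1m isUnit_one
  have hvz : v (z : K) = 0 := (my_unit_iff v hv0 hvmul O hO z).mp hzunit
  have hz0 : (z : K) ≠ 0 := by
    intro h0
    rw [h0, (hv0 0).mpr rfl] at hvz
    exact (WithTop.coe_ne_top (a := (0:Γ))) hvz.symm
  set y : K := (z : K)⁻¹ with hy
  have hvy : v y = 0 := by
    have := my_v_inv v hv0 hvmul hz0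
    rw [hvz, zero_add] at this
    exact this
  -- root over K
  have hsumK : (z:K)^n + (z:K)^(n-1) + ∑ i ∈ Icc 2 n, q i * (z:K)^(n-i) = 0 := by
    have h1 : (O.subtype) (hpoly.eval z) = 0 := by rw [hzroot]; exact map_zero _
    rw [← Polynomial.eval₂_at_apply, ← Polynomial.eval_map] at h1
    rw [hpolydef, hr] at h1
    simp only [Polynomial.map_add, Polynomial.map_pow, Polynomial.map_X, Polynomial.map_sum,
      Polynomial.map_mul, Polynomial.map_C, Polynomial.eval_add, Polynomial.eval_pow,
      Polynomial.eval_X, Polynomial.eval_finset_sum, Polynomial.eval_mul, Polynomial.eval_C]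
      at h1
    convert h1 using 2 <;> rfl
  have hsum2 : ∑ i ∈ range (n+1), q i * (z:K)^(n-i) = 0 := by
    rw [my_sum_split (fun i => q i * (z:K)^(n-i)) hn1]
    simp only [hq0, hq1, one_mul, Nat.sub_zero]
    exact hsumK
  have hyz : ∀ i ∈ range (n+1), y^n * (q i * (z:K)^(n-i)) = q i * y^i := by
    intro i hi
    rw [mem_range] at hi
    have h1 : y^n = y^i * y^(n-i) := by rw [← pow_add]; congr 1; omega
    have h2 : y^(n-i) * (z:K)^(n-i) = 1 := by
      rw [← mul_pow, hy, inv_mul_cancel₀ hz0, one_pow]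
    calc y^n * (q i * (z:K)^(n-i)) = q i * (y^i * (y^(n-i) * (z:K)^(n-i))) := by rw [h1]; ring
    _ = q i * y^i := by rw [h2, mul_one]
  have hg : ∑ i ∈ range (n+1), q i * y^i = 0 := by
    calc ∑ i ∈ range (n+1), q i * y^i
        = ∑ i ∈ range (n+1), y^n * (q i * (z:K)^(n-i)) := by
          refine Finset.sum_congr rfl fun i hi => (hyz i hi).symm
    _ = y^n * ∑ i ∈ range (n+1), q i * (z:K)^(n-i) := by rw [Finset.mul_sum]
    _ = 0 := by rw [hsum2, mul_zero]
  have hev : P.eval (t*y + a) = e * ∑ i ∈ range (n+1), q i * y^i := by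
    have h1 : P.eval (t*y + a) = (Polynomial.taylor a P).eval (t*y) :=
      (Polynomial.taylor_eval a P (t*y)).symm
    rw [h1, Polynomial.eval_eq_sum_range, Polynomial.natDegree_taylor, hn, Finset.mul_sum]
    refine Finset.sum_congr rfl fun i hi => ?_
    show d i * (t*y)^i = e * (q i * y^i)
    have hq : q i = d i * t^i / e := rfl
    rw [hq]
    field_simp
    ring
  set b : K := t * y + a with hb
  have hPb : P.eval b = 0 := by rw [hb, hev, hg, mul_zero]
  have hvty : v (t * y) = ↑s := by rw [hvmul, ht, hvy, add_zero]
  have hbO : b ∈ O := by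
    rw [hO]
    refine le_trans ?_ (hvadd (t*y) a)
    rw [le_min_iff]
    exact ⟨by rw [hvty]; exact_mod_cast le_of_lt hspos, (hO a).mp ha⟩
  have hab : v (a - b) = ↑s := by
    have h3 : a - b = -(t * y) := by rw [hb]; ring
    rw [h3, my_v_neg v hv0 hvmul, hvty]
  refine ⟨b, hbO, hPb, ?_⟩
  rw [hab]
  exact_mod_cast hδs
end

section
/- Suppose K has characteristic 0. Let α ∈ K, let f(x) = Σ_{i=0}^d a_i (x − α)^i be a nonzero polynomial over K, let β ∈ K with β ≠ α, and set m = max{ i ≤ d : ∀ j ≤ d, v(a_i(β − α)^i) ≤ v(a_j(β − α)^j) }. Then v(f^{(m)}(β)) = v(m!) + v(a_m), where f^{(m)} is the m-th derivative of f. -/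
open Polynomial

/-- Suppose `K` has characteristic `0`. Let
`f(x) = Σ_{i=0}^d a_i (x − α)^i` be nonzero, `β ≠ α`, and let `m` be the largest
`i ≤ d` such that `v(a_i(β − α)^i) ≤ v(a_j(β − α)^j)` for all `j ≤ d`.  Then
`v(f^{(m)}(β)) = v(m!) + v(a_m)`. -/
theorem stmt_17 {K : Type*} [Field K] [CharZero K]
    {Γ : Type*} [AddCommGroup Γ] [LinearOrder Γ] [IsOrderedAddMonoid Γ]
    (v : K → WithTop Γ) (hsurj : Function.Surjective v)
    (hv0 : ∀ x : K, v x = ⊤ ↔ x = 0)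
    (hvmul : ∀ x y : K, v (x * y) = v x + v y)
    (hvadd : ∀ x y : K, min (v x) (v y) ≤ v (x + y))
    (α : K) (d : ℕ) (a : ℕ → K) (f : K[X])
    (hf : f = ∑ i ∈ Finset.range (d + 1), C (a i) * (X - C α) ^ i)
    (hf0 : f ≠ 0)
    (β : K) (hβ : β ≠ α)
    (m : ℕ) (hmd : m ≤ d)
    (hmmin : ∀ j ≤ d, v (a m * (β - α) ^ m) ≤ v (a j * (β - α) ^ j))
    (hmmax : ∀ i ≤ d, (∀ j ≤ d, v (a i * (β - α) ^ i) ≤ v (a j * (β - α) ^ j)) → i ≤ m) :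
    v ((derivative^[m] f).eval β) = v ((m.factorial : K)) + v (a m) := by
  -- basic valuation facts
  have hv1 : v 1 = 0 := by
    have h := hvmul 1 1
    rw [one_mul] at h
    have h1 : v 1 ≠ ⊤ := by simp [hv0]
    lift v 1 to Γ using h1 with g hg
    norm_cast at h ⊢
    exact (add_left_cancel (a := g) (by rw [← h, add_zero])).symm
  have hvne : ∀ x : K, x ≠ 0 → v x ≠ ⊤ := fun x hx h => hx ((hv0 x).1 h)
  have hvneg : ∀ x : K, v (-x) = v x := by
    have hm1 : v (-1 : K) = 0 := by
      have h : v (-1 : K) + v (-1 : K) = 0 := by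
        rw [← hvmul, neg_mul_neg, one_mul, hv1]
      have h1 : v (-1 : K) ≠ ⊤ := hvne _ (by norm_num)
      lift v (-1 : K) to Γ using h1 with g hg
      norm_cast at h ⊢
      rcases lt_trichotomy g 0 with hlt | he | hgt
      · exact absurd h (by have := add_lt_add hlt hlt; simpa using this.ne)
      · exact he
      · exact absurd h (by have := add_lt_add hgt hgt; simpa using this.ne')
    intro x
    rw [← neg_one_mul, hvmul, hm1, zero_add]
  have hvnat : ∀ n : ℕ, (0 : WithTop Γ) ≤ v (n : K) := by
    intro n
    induction n with
    | zero => simp [(hv0 0).2 rfl]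
    | succ k ih =>
      push_cast
      refine le_trans ?_ (hvadd (k : K) 1)
      simp [hv1, ih]
  -- v(x+y) = v x when v x < v y
  have hlt : ∀ x y : K, v x < v y → v (x + y) = v x := by
    intro x y hxy
    refine le_antisymm ?_ (by simpa [min_eq_left hxy.le] using hvadd x y)
    have h2 := hvadd (x + y) (-y)
    rw [add_neg_cancel_right, hvneg] at h2
    by_contra hc
    push_neg at hc
    exact absurd h2 (not_le.mpr (lt_min hc hxy))
  -- lower bound for sums
  have hsum : ∀ (s : Finset ℕ) (t : ℕ → K) (c : WithTop Γ), c ≠ ⊤ →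
      (∀ i ∈ s, c < v (t i)) → c < v (∑ i ∈ s, t i) := by
    intro s t c hc h
    induction s using Finset.induction with
    | empty => simpa [(hv0 0).2 rfl] using lt_top_iff_ne_top.2 hc
    | @insert x s hx ih =>
      rw [Finset.sum_insert hx]
      exact lt_of_lt_of_le
        (lt_min (h x (Finset.mem_insert_self _ _))
          (ih fun i hi => h i (Finset.mem_insert_of_mem hi)))
        (hvadd _ _)
  -- setup
  have hβα : β - α ≠ 0 := sub_ne_zero.mpr hβ
  obtain ⟨γ, hγ⟩ := WithTop.ne_top_iff_exists.mp (hvne _ hβα)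
  have hpow : ∀ n : ℕ, v ((β - α) ^ n) = ((n • γ : Γ) : WithTop Γ) := by
    intro n
    induction n with
    | zero => simpa using hv1
    | succ k ih =>
      rw [pow_succ, hvmul, ih, ← hγ, succ_nsmul]
      push_cast
      ring
  -- a m ≠ 0
  have ham : a m ≠ 0 := by
    intro h0
    apply hf0
    rw [hf]
    refine Finset.sum_eq_zero fun j hj => ?_
    have hj' : j ≤ d := Nat.lt_succ_iff.mp (Finset.mem_range.mp hj)
    have hle := hmmin j hj'
    rw [h0, zero_mul, (hv0 0).2 rfl] at hle
    have hz : a j * (β - α) ^ j = 0 := (hv0 _).1 (top_le_iff.mp hle)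
    rcases mul_eq_zero.mp hz with h | h
    · rw [h]; simp
    · exact absurd h (pow_ne_zero _ hβα)
  have hmfac : (m.factorial : K) ≠ 0 := Nat.cast_ne_zero.mpr m.factorial_ne_zero
  -- the terms
  set t : ℕ → K := fun i => a i * ((i.descFactorial m : K) * (β - α) ^ (i - m)) with ht
  have heval : (derivative^[m] f).eval β = ∑ i ∈ Finset.range (d + 1), t i := by
    rw [hf, iterate_derivative_sum, eval_finset_sum]
    refine Finset.sum_congr rfl fun i _ => ?_
    rw [iterate_derivative_C_mul, iterate_derivative_X_sub_pow]
    simp only [ht, nsmul_eq_mul, eval_mul, eval_C, eval_pow, eval_natCast, eval_sub, eval_X]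
  have htm : t m = a m * (m.factorial : K) := by
    simp [ht, Nat.descFactorial_self]
  have hvtm : v (t m) = v (a m) + v ((m.factorial : K)) := by
    rw [htm, hvmul]
  have hvtmne : v (t m) ≠ ⊤ := hvne _ (by rw [htm]; exact mul_ne_zero ham hmfac)
  -- strict inequality for i ≠ m in range
  have hkey : ∀ i ∈ Finset.range (d + 1), i ≠ m → v (t m) < v (t i) := by
    intro i hi hne
    have hid : i ≤ d := Nat.lt_succ_iff.mp (Finset.mem_range.mp hi)
    rcases lt_or_gt_of_ne hne with hlt' | hgt
    · -- i < m : descFactorial = 0, term is 0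
      have hz : t i = 0 := by
        simp [ht, Nat.descFactorial_eq_zero_iff_lt.mpr hlt']
      rw [hz, (hv0 0).2 rfl]
      exact lt_top_iff_ne_top.2 hvtmne
    · -- i > m
      have hstrict : v (a m * (β - α) ^ m) < v (a i * (β - α) ^ i) := by
        have hnot : ¬ (∀ j ≤ d, v (a i * (β - α) ^ i) ≤ v (a j * (β - α) ^ j)) :=
          fun h => absurd (hmmax i hid h) (not_le.mpr hgt)
        push_neg at hnot
        obtain ⟨j, hjd, hj⟩ := hnot
        exact (hmmin j hjd).trans_lt hj
      -- rewrite using hvmul and hpow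
      rw [hvmul, hvmul, hpow, hpow] at hstrict
      have hisplit : ((i • γ : Γ) : WithTop Γ)
          = (((i - m) • γ : Γ) : WithTop Γ) + ((m • γ : Γ) : WithTop Γ) := by
        norm_cast
        rw [← add_nsmul, Nat.sub_add_cancel hgt.le]
      rw [hisplit, ← add_assoc] at hstrict
      have h1 : v (a m) < v (a i) + (((i - m) • γ : Γ) : WithTop Γ) :=
        (WithTop.add_lt_add_iff_right (WithTop.coe_ne_top)).mp hstrict
      -- valuation of descFactorial
      have hdesc : v ((m.factorial : K)) ≤ v ((i.descFactorial m : K)) := by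
        have hcast : ((i.descFactorial m : ℕ) : K)
            = (m.factorial : K) * ((i.choose m : ℕ) : K) := by
          rw [← Nat.cast_mul, Nat.descFactorial_eq_factorial_mul_choose]
        rw [hcast, hvmul]
        calc v ((m.factorial : K)) = v ((m.factorial : K)) + 0 := (add_zero _).symm
          _ ≤ _ := add_le_add_right (hvnat _) _
      have hvti : v (t i) = v (a i) + (v ((i.descFactorial m : K))
          + (((i - m) • γ : Γ) : WithTop Γ)) := by
        rw [ht]
        simp only
        rw [hvmul, hvmul, hpow]
      rw [hvti, hvtm]
      calc v (a m) + v ((m.factorial : K))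
          < (v (a i) + (((i - m) • γ : Γ) : WithTop Γ)) + v ((m.factorial : K)) :=
            WithTop.add_lt_add_right (hvne _ hmfac) h1
        _ ≤ (v (a i) + (((i - m) • γ : Γ) : WithTop Γ)) + v ((i.descFactorial m : K)) :=
            add_le_add_right hdesc _
        _ = v (a i) + (v ((i.descFactorial m : K)) + (((i - m) • γ : Γ) : WithTop Γ)) := by
            rw [add_assoc, add_comm (((i - m) • γ : Γ) : WithTop Γ)]
  -- conclude
  have hmmem : m ∈ Finset.range (d + 1) := Finset.mem_range.mpr (Nat.lt_succ_of_le hmd)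
  rw [heval, ← Finset.add_sum_erase _ t hmmem,
    hlt _ _ (hsum _ t _ hvtmne fun i hi =>
      hkey i (Finset.mem_of_mem_erase hi) (Finset.ne_of_mem_erase hi)),
    hvtm, add_comm]
end
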